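/- In the setting of mixed-logit demand with log-normal mixing, for k ≠ j the cross derivative satisfies ∂_{p_k} q_j(p) = M ∫₀^∞ α σ_j(p,α) σ_k(p,α) f(α) dα ≥ 0, and there is a constant C > 0 (depending on δ, M) such that along any ray p ∈ ℝ_{++}^J, 0 ≤ ∂_{p_k} q_j(λ p) ≤ C (−L'(c_{jk} λ p_j)) for all λ > 0, where c_{jk} = (p_j + p_k)/p_j > 1 and L is the log-normal Laplace transform. Consequently the cross semi-elasticity η_{jk}(λ p) = ∂_{p_k} q_j(λ p)/q_j(λ p) → 0 as λ → ∞. -/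

import Mathlib

open MeasureTheory Real Filter

/-- Density of the log-normal distribution with parameters `μ` and `σ` on `(0, ∞)`. -/
noncomputable def lognormalPdf (μ σ : ℝ) (α : ℝ) : ℝ :=
  (1 / (α * σ * Real.sqrt (2 * Real.pi))) * Real.exp (-(Real.log α - μ) ^ 2 / (2 * σ ^ 2))

/-- Laplace transform of the log-normal distribution. -/
noncomputable def lnLaplace (μ σ : ℝ) (x : ℝ) : ℝ :=
  ∫ α in Set.Ioi (0 : ℝ), Real.exp (-α * x) * lognormalPdf μ σ α

/-- Logit choice probability of product `j` at prices `p`, mean utilities `δ`,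
and price coefficient `α`. -/
noncomputable def logitShare {J : ℕ} (δ : Fin J → ℝ) (j : Fin J) (p : Fin J → ℝ) (α : ℝ) : ℝ :=
  Real.exp (δ j - α * p j) / (1 + ∑ l, Real.exp (δ l - α * p l))

/-- Mixed-logit demand for product `j` with log-normal mixing over the price coefficient. -/
noncomputable def qLN {J : ℕ} (δ : Fin J → ℝ) (M μ σ : ℝ) (j : Fin J) (p : Fin J → ℝ) : ℝ :=
  M * ∫ α in Set.Ioi (0 : ℝ), logitShare δ j p α * lognormalPdf μ σ α

/-- Partial derivative of `F : (Fin J → ℝ) → ℝ` in the `k`-th coordinate at `p`. -/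
noncomputable def pd {J : ℕ} (F : (Fin J → ℝ) → ℝ) (k : Fin J) (p : Fin J → ℝ) : ℝ :=
  deriv (fun t => F (Function.update p k t)) (p k)



section aux
variable {μ σ : ℝ}

lemma sqrt2pi_pos : 0 < Real.sqrt (2 * Real.pi) := Real.sqrt_pos.2 (by positivity)

lemma pdf_pos (hσ : 0 < σ) {α : ℝ} (hα : 0 < α) : 0 < lognormalPdf μ σ α := by
  unfold lognormalPdf
  have := sqrt2pi_pos
  positivity

lemma pdf_nonneg (hσ : 0 < σ) {α : ℝ} (hα : α ∈ Set.Ioi (0:ℝ)) : 0 ≤ lognormalPdf μ σ α :=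
  (pdf_pos hσ hα).le

/-- master bound : f α ≤ C(r) * α ^ r on (0,∞) -/
lemma pdf_le (hσ : 0 < σ) (r : ℝ) {α : ℝ} (hα : 0 < α) :
    lognormalPdf μ σ α ≤
      Real.exp ((r+1)^2 * σ^2 / 2 - (r+1)*μ) / (σ * Real.sqrt (2 * Real.pi)) * α ^ r := by
  have hs := sqrt2pi_pos
  have hαr : (α : ℝ) ^ r = Real.exp (r * Real.log α) := by
    rw [Real.rpow_def_of_pos hα, mul_comm]
  unfold lognormalPdf
  rw [hαr]
  set y := Real.log α with hy
  have hαy : α = Real.exp y := (Real.exp_log hα).symm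
  rw [hαy]
  have hE : 0 < Real.exp y := Real.exp_pos y
  have h1 : 1 / (Real.exp y * σ * Real.sqrt (2 * Real.pi)) *
      Real.exp (-(y - μ) ^ 2 / (2 * σ ^ 2)) =
      Real.exp (-(y - μ) ^ 2 / (2 * σ ^ 2) - y) / (σ * Real.sqrt (2 * Real.pi)) := by
    rw [Real.exp_sub]; field_simp
  have h2 : Real.exp ((r+1)^2 * σ^2 / 2 - (r+1)*μ) / (σ * Real.sqrt (2 * Real.pi)) *
      Real.exp (r * y) =
      Real.exp ((r+1)^2 * σ^2 / 2 - (r+1)*μ + r * y) / (σ * Real.sqrt (2 * Real.pi)) := by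
    rw [Real.exp_add]; ring
  rw [h1, h2]
  apply div_le_div_of_nonneg_right ?_ (by positivity) |>.trans_eq rfl
  apply Real.exp_le_exp.mpr
  have h2σ : (0:ℝ) < 2 * σ ^ 2 := by positivity
  rw [sub_le_iff_le_add, div_le_iff₀ h2σ]
  nlinarith [sq_nonneg (y - μ + (r+1) * σ^2), sq_nonneg σ]


lemma measurable_pdf : Measurable (lognormalPdf μ σ) := by
  unfold lognormalPdf; measurability

lemma integrableOn_of_bounds {g : ℝ → ℝ} (hg : Measurable g)
    (h0 : ∀ α ∈ Set.Ioi (0:ℝ), 0 ≤ g α) {C₁ C₂ : ℝ}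
    (hb1 : ∀ α ∈ Set.Ioc (0:ℝ) 1, g α ≤ C₁)
    (hb2 : ∀ α ∈ Set.Ioi (1:ℝ), g α ≤ C₂ * α ^ (-2:ℝ)) :
    IntegrableOn g (Set.Ioi (0:ℝ)) := by
  have hsplit : Set.Ioc (0:ℝ) 1 ∪ Set.Ioi 1 = Set.Ioi 0 := Set.Ioc_union_Ioi_eq_Ioi zero_le_one
  rw [← hsplit]
  apply IntegrableOn.union
  · apply Measure.integrableOn_of_bounded (measure_Ioc_lt_top).ne hg.aestronglyMeasurable
    filter_upwards [ae_restrict_mem measurableSet_Ioc] with α hα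
    rw [Real.norm_eq_abs, abs_of_nonneg (h0 α (Set.mem_Ioi.2 hα.1))]
    exact hb1 α hα
  · apply Integrable.mono ((integrableOn_Ioi_rpow_of_lt (show (-2:ℝ) < -1 by norm_num) one_pos).const_mul C₂)
      hg.aestronglyMeasurable
    filter_upwards [ae_restrict_mem measurableSet_Ioi] with α hα
    have h1 : (0:ℝ) < α := lt_trans one_pos hα
    rw [Real.norm_eq_abs, Real.norm_eq_abs, abs_of_nonneg (h0 α h1)]
    refine (hb2 α hα).trans (le_abs_self _)

lemma integrable_pdf (hσ : 0 < σ) : IntegrableOn (lognormalPdf μ σ) (Set.Ioi (0:ℝ)) := by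
  apply integrableOn_of_bounds measurable_pdf (fun α hα => pdf_nonneg hσ hα)
  · intro α hα
    have := pdf_le (μ := μ) hσ 0 hα.1
    simpa [Real.rpow_zero] using this
  · intro α hα
    have := pdf_le (μ := μ) hσ (-2) (lt_trans one_pos hα)
    simpa using this

lemma integrable_id_mul_pdf (hσ : 0 < σ) :
    IntegrableOn (fun α => α * lognormalPdf μ σ α) (Set.Ioi (0:ℝ)) := by
  apply integrableOn_of_bounds (measurable_id.mul measurable_pdf)
  · intro α hα; exact mul_nonneg (le_of_lt hα) (pdf_nonneg hσ hα)
  · intro α hα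
    have := pdf_le (μ := μ) hσ 0 hα.1
    rw [Real.rpow_zero, mul_one] at this
    calc α * lognormalPdf μ σ α ≤ 1 * (Real.exp ((0+1)^2 * σ^2 / 2 - (0+1)*μ) / (σ * Real.sqrt (2 * Real.pi))) := by
          apply mul_le_mul hα.2 this (pdf_nonneg hσ hα.1) zero_le_one
      _ = _ := one_mul _
  · intro α hα
    have h0 : (0:ℝ) < α := lt_trans one_pos hα
    have := pdf_le (μ := μ) hσ (-3) h0
    calc α * lognormalPdf μ σ α
        ≤ α * (Real.exp ((-3+1)^2 * σ^2 / 2 - (-3+1)*μ) / (σ * Real.sqrt (2 * Real.pi)) * α ^ (-3:ℝ)) := by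
          apply mul_le_mul_of_nonneg_left this h0.le
      _ = Real.exp ((-3+1)^2 * σ^2 / 2 - (-3+1)*μ) / (σ * Real.sqrt (2 * Real.pi)) * α ^ (-2:ℝ) := by
          rw [show (-2:ℝ) = -3 + 1 by norm_num, Real.rpow_add_one h0.ne', Real.rpow_neg h0.le]
          ring


section share
variable {J : ℕ} {δ : Fin J → ℝ} {j k : Fin J} {p : Fin J → ℝ} {α : ℝ}

lemma denom_pos : 0 < 1 + ∑ l, Real.exp (δ l - α * p l) := by
  have : (0:ℝ) ≤ ∑ l, Real.exp (δ l - α * p l) :=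
    Finset.sum_nonneg fun l _ => (Real.exp_pos _).le
  linarith

lemma share_pos : 0 < logitShare δ j p α :=
  div_pos (Real.exp_pos _) denom_pos

lemma share_le_one : logitShare δ j p α ≤ 1 := by
  rw [logitShare, div_le_one denom_pos]
  have h : Real.exp (δ j - α * p j) ≤ ∑ l, Real.exp (δ l - α * p l) :=
    Finset.single_le_sum (f := fun l => Real.exp (δ l - α * p l)) (fun l _ => (Real.exp_pos _).le) (Finset.mem_univ j)
  linarith

lemma share_le_exp : logitShare δ j p α ≤ Real.exp (δ j - α * p j) := by
  rw [logitShare]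
  nth_rewrite 2 [show Real.exp (δ j - α * p j) = Real.exp (δ j - α * p j) / 1 by ring]
  apply div_le_div_of_nonneg_left (Real.exp_pos _).le one_pos ?_ |>.trans_eq rfl
  have : (0:ℝ) ≤ ∑ l, Real.exp (δ l - α * p l) :=
    Finset.sum_nonneg fun l _ => (Real.exp_pos _).le
  linarith

lemma share_ge (hα : 0 ≤ α) (hp : ∀ i, 0 < p i) :
    Real.exp (δ j - α * p j) / (1 + ∑ l, Real.exp (δ l)) ≤ logitShare δ j p α := by
  rw [logitShare]
  apply div_le_div_of_nonneg_left (Real.exp_pos _).le denom_pos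
  have : ∀ l, Real.exp (δ l - α * p l) ≤ Real.exp (δ l) := fun l => by
    apply Real.exp_le_exp.2
    nlinarith [hp l]
  have := Finset.sum_le_sum (fun l (_ : l ∈ Finset.univ) => this l)
  linarith

lemma hasDerivAt_share (hkj : k ≠ j) (t₀ : ℝ) :
    HasDerivAt (fun t => logitShare δ j (Function.update p k t) α)
      (α * (logitShare δ j (Function.update p k t₀) α *
        logitShare δ k (Function.update p k t₀) α)) t₀ := by
  have hupj : ∀ t, Function.update p k t j = p j := fun t => Function.update_of_ne (Ne.symm hkj) _ _
  have hupk : ∀ t, Function.update p k t k = t := fun t => Function.update_self _ _ _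
  set g : ℝ → ℝ := fun t => 1 + ∑ l, Real.exp (δ l - α * Function.update p k t l) with hg
  have hgpos : ∀ t, 0 < g t := fun t => denom_pos
  have hgd : HasDerivAt g (-(α * Real.exp (δ k - α * t₀))) t₀ := by
    have hsum : HasDerivAt (fun t => ∑ l, Real.exp (δ l - α * Function.update p k t l))
        (∑ l, if l = k then -(α * Real.exp (δ k - α * t₀)) else 0) t₀ := by
      apply HasDerivAt.fun_sum
      intro l _
      by_cases hl : l = k
      · subst hl
        rw [if_pos rfl]
        have h1 : HasDerivAt (fun t : ℝ => δ l - α * t) (-α) t₀ := by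
          simpa using ((hasDerivAt_id t₀).const_mul α).const_sub (δ l)
        have := h1.exp
        simp only [hupk]
        refine this.congr_deriv ?_
        ring
      · simp only [if_neg hl, hupj]
        simp only [Function.update_of_ne hl]
        exact hasDerivAt_const _ _
    have : HasDerivAt (fun t => 1 + ∑ l, Real.exp (δ l - α * Function.update p k t l))
        (∑ l, if l = k then -(α * Real.exp (δ k - α * t₀)) else 0) t₀ := by
      exact hsum.const_add 1
    convert this using 1
    rw [Finset.sum_ite_eq' Finset.univ k fun _ => -(α * Real.exp (δ k - α * t₀))]
    simp
  have hcd : HasDerivAt (fun _ : ℝ => Real.exp (δ j - α * p j)) 0 t₀ := hasDerivAt_const _ _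
  have hdiv := hcd.div hgd (hgpos t₀).ne'
  have heq : (fun t => logitShare δ j (Function.update p k t) α)
      = fun t => Real.exp (δ j - α * p j) / g t := by
    funext t
    rw [logitShare, hupj]
  rw [heq]
  refine hdiv.congr_deriv ?_
  symm
  rw [logitShare, logitShare, hupj, hupk]
  have h := (hgpos t₀).ne'
  field_simp
  ring


lemma continuous_share : Continuous (fun α => logitShare δ j p α) := by
  apply Continuous.div
  · fun_prop
  · fun_prop
  · intro α; exact denom_pos.ne'

lemma integrable_share_mul (hσ : 0 < σ) (q : Fin J → ℝ) :
    IntegrableOn (fun α => logitShare δ j q α * lognormalPdf μ σ α) (Set.Ioi (0:ℝ)) := by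
  apply Integrable.mono (integrable_pdf hσ)
    ((continuous_share.measurable.mul measurable_pdf).aestronglyMeasurable)
  filter_upwards [ae_restrict_mem measurableSet_Ioi] with α hα
  simp only [Pi.mul_apply]
  rw [Real.norm_eq_abs, Real.norm_eq_abs,
    abs_of_nonneg (mul_nonneg share_pos.le (pdf_nonneg hσ hα)),
    abs_of_nonneg (pdf_nonneg hσ hα)]
  exact mul_le_of_le_one_left (pdf_nonneg hσ hα) share_le_one |>.trans_eq (by ring) |>.trans_eq rfl

lemma integral_share_pos (hσ : 0 < σ) (q : Fin J → ℝ) :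
    0 < ∫ α in Set.Ioi (0:ℝ), logitShare δ j q α * lognormalPdf μ σ α := by
  rw [setIntegral_pos_iff_support_of_nonneg_ae ?_ (integrable_share_mul hσ q)]
  · have hsub : Set.Ioi (0:ℝ) ⊆ Function.support (fun α => logitShare δ j q α * lognormalPdf μ σ α) := by
      intro α hα
      exact (mul_pos share_pos (pdf_pos hσ hα)).ne'
    rw [Set.inter_eq_right.2 hsub]
    simp
  · filter_upwards [ae_restrict_mem measurableSet_Ioi] with α hα
    exact mul_nonneg share_pos.le (pdf_nonneg hσ hα)

lemma key_deriv (hσ : 0 < σ) (hkj : k ≠ j) :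
    IntegrableOn (fun α => α * (logitShare δ j p α * logitShare δ k p α) *
        lognormalPdf μ σ α) (Set.Ioi (0:ℝ)) ∧
    HasDerivAt (fun t => ∫ α in Set.Ioi (0:ℝ),
        logitShare δ j (Function.update p k t) α * lognormalPdf μ σ α)
      (∫ α in Set.Ioi (0:ℝ), α * (logitShare δ j p α * logitShare δ k p α) *
        lognormalPdf μ σ α) (p k) := by
  have main := hasDerivAt_integral_of_dominated_loc_of_deriv_le (μ := volume.restrict (Set.Ioi 0))
    (F := fun t α => logitShare δ j (Function.update p k t) α * lognormalPdf μ σ α)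
    (F' := fun t α => α * (logitShare δ j (Function.update p k t) α *
      logitShare δ k (Function.update p k t) α) * lognormalPdf μ σ α)
    (x₀ := p k) (bound := fun α => α * lognormalPdf μ σ α) (Metric.ball_mem_nhds _ one_pos)
    (Eventually.of_forall fun t =>
      (continuous_share.measurable.mul measurable_pdf).aestronglyMeasurable)
    (integrable_share_mul hσ _)
    (((measurable_id.mul (continuous_share.measurable.mul continuous_share.measurable)).mul
      measurable_pdf).aestronglyMeasurable)
    ?_ (integrable_id_mul_pdf hσ) ?_
  · obtain ⟨hi, hd⟩ := main
    simp only [Function.update_eq_self] at hi hd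
    exact ⟨hi, hd⟩
  · filter_upwards [ae_restrict_mem measurableSet_Ioi] with α hα t _
    have h1 : logitShare δ j (Function.update p k t) α *
        logitShare δ k (Function.update p k t) α ≤ 1 :=
      mul_le_one₀ share_le_one share_pos.le share_le_one
    have h0 : (0:ℝ) ≤ logitShare δ j (Function.update p k t) α *
        logitShare δ k (Function.update p k t) α := mul_nonneg share_pos.le share_pos.le
    have hf := pdf_nonneg (μ := μ) hσ hα
    have hα' : (0:ℝ) < α := hα
    rw [Real.norm_eq_abs, abs_of_nonneg (mul_nonneg (mul_nonneg hα'.le h0) hf)]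
    calc α * (logitShare δ j (Function.update p k t) α *
          logitShare δ k (Function.update p k t) α) * lognormalPdf μ σ α
        ≤ α * 1 * lognormalPdf μ σ α :=
          mul_le_mul_of_nonneg_right (mul_le_mul_of_nonneg_left h1 hα'.le) hf
      _ = α * lognormalPdf μ σ α := by ring
  · filter_upwards with α t _
    exact (hasDerivAt_share hkj t).mul_const _


lemma int_cross_nonneg (hσ : 0 < σ) (q : Fin J → ℝ) :
    0 ≤ ∫ α in Set.Ioi (0:ℝ), α * (logitShare δ j q α * logitShare δ k q α) *
      lognormalPdf μ σ α := by
  apply setIntegral_nonneg measurableSet_Ioi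
  intro α hα
  exact mul_nonneg (mul_nonneg (le_of_lt hα) (mul_nonneg share_pos.le share_pos.le))
    (pdf_nonneg hσ hα)

end share


section laplace
variable {μ σ : ℝ}

lemma measurable_exp_neg (t : ℝ) : Measurable fun α : ℝ => Real.exp (-α * t) :=
  Real.measurable_exp.comp (measurable_id.neg.mul_const t)

lemma integrable_exp_mul_pdf (hσ : 0 < σ) {x : ℝ} (hx : 0 ≤ x) :
    IntegrableOn (fun α => Real.exp (-α * x) * lognormalPdf μ σ α) (Set.Ioi (0:ℝ)) := by
  apply Integrable.mono (integrable_pdf hσ)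
    ((measurable_exp_neg x).mul measurable_pdf).aestronglyMeasurable
  filter_upwards [ae_restrict_mem measurableSet_Ioi] with α hα
  have hα' : (0:ℝ) < α := hα
  have hf := pdf_nonneg (μ := μ) hσ hα
  have he : Real.exp (-α * x) ≤ 1 := Real.exp_le_one_iff.2 (by nlinarith)
  simp only [Pi.mul_apply]
  rw [Real.norm_eq_abs, Real.norm_eq_abs, abs_of_nonneg (mul_nonneg (Real.exp_pos _).le hf),
    abs_of_nonneg hf]
  exact mul_le_of_le_one_left hf he

lemma integrable_mul_exp_pdf (hσ : 0 < σ) {x : ℝ} (hx : 0 ≤ x) :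
    IntegrableOn (fun α => α * Real.exp (-α * x) * lognormalPdf μ σ α) (Set.Ioi (0:ℝ)) := by
  apply Integrable.mono (integrable_id_mul_pdf (μ := μ) hσ)
    ((measurable_id.mul (measurable_exp_neg x)).mul measurable_pdf).aestronglyMeasurable
  filter_upwards [ae_restrict_mem measurableSet_Ioi] with α hα
  have hα' : (0:ℝ) < α := hα
  have hf := pdf_nonneg (μ := μ) hσ hα
  have he : Real.exp (-α * x) ≤ 1 := Real.exp_le_one_iff.2 (by nlinarith)
  simp only [Real.norm_eq_abs, id_eq, Pi.mul_apply]
  rw [abs_of_nonneg (mul_nonneg (mul_nonneg hα'.le (Real.exp_pos _).le) hf),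
    abs_of_nonneg (mul_nonneg hα'.le hf)]
  calc α * Real.exp (-α * x) * lognormalPdf μ σ α ≤ α * 1 * lognormalPdf μ σ α :=
        mul_le_mul_of_nonneg_right (mul_le_mul_of_nonneg_left he hα'.le) hf
    _ = α * lognormalPdf μ σ α := by ring

lemma integral_exp_pdf_pos (hσ : 0 < σ) {x : ℝ} (hx : 0 ≤ x) :
    0 < ∫ α in Set.Ioi (0:ℝ), Real.exp (-α * x) * lognormalPdf μ σ α := by
  rw [setIntegral_pos_iff_support_of_nonneg_ae ?_ (integrable_exp_mul_pdf hσ hx)]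
  · have hsub : Set.Ioi (0:ℝ) ⊆
        Function.support (fun α => Real.exp (-α * x) * lognormalPdf μ σ α) := by
      intro α hα
      exact (mul_pos (Real.exp_pos _) (pdf_pos hσ hα)).ne'
    rw [Set.inter_eq_right.2 hsub]
    simp
  · filter_upwards [ae_restrict_mem measurableSet_Ioi] with α hα
    exact mul_nonneg (Real.exp_pos _).le (pdf_nonneg hσ hα)

lemma lnLaplace_hasDerivAt (hσ : 0 < σ) {x : ℝ} (hx : 0 < x) :
    HasDerivAt (lnLaplace μ σ)
      (-(∫ α in Set.Ioi (0:ℝ), α * Real.exp (-α * x) * lognormalPdf μ σ α)) x := by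
  have main := hasDerivAt_integral_of_dominated_loc_of_deriv_le (μ := volume.restrict (Set.Ioi 0))
    (F := fun t α => Real.exp (-α * t) * lognormalPdf μ σ α)
    (F' := fun t α => -(α * Real.exp (-α * t)) * lognormalPdf μ σ α)
    (x₀ := x) (bound := fun α => α * lognormalPdf μ σ α) (Metric.ball_mem_nhds _ hx)
    (Eventually.of_forall fun t =>
      ((measurable_exp_neg t).mul measurable_pdf).aestronglyMeasurable)
    (integrable_exp_mul_pdf hσ hx.le)
    (((measurable_id.mul (measurable_exp_neg x)).neg.mul measurable_pdf).aestronglyMeasurable)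
    ?_ (integrable_id_mul_pdf hσ) ?_
  · have hd := main.2
    have heq : (∫ α in Set.Ioi (0:ℝ), -(α * Real.exp (-α * x)) * lognormalPdf μ σ α)
        = -(∫ α in Set.Ioi (0:ℝ), α * Real.exp (-α * x) * lognormalPdf μ σ α) := by
      rw [← integral_neg]
      congr 1; funext α; ring
    rw [heq] at hd
    exact hd
  · filter_upwards [ae_restrict_mem measurableSet_Ioi] with α hα t ht
    have hα' : (0:ℝ) < α := hα
    have hf := pdf_nonneg (μ := μ) hσ hα
    have ht' : 0 < t := by
      rw [Metric.mem_ball, Real.dist_eq, abs_lt] at ht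
      linarith
    have he : Real.exp (-α * t) ≤ 1 := Real.exp_le_one_iff.2 (by nlinarith)
    have hnn : 0 ≤ α * Real.exp (-α * t) * lognormalPdf μ σ α :=
      mul_nonneg (mul_nonneg hα'.le (Real.exp_pos _).le) hf
    rw [Real.norm_eq_abs, show -(α * Real.exp (-α * t)) * lognormalPdf μ σ α
        = -(α * Real.exp (-α * t) * lognormalPdf μ σ α) by ring, abs_neg, abs_of_nonneg hnn]
    calc α * Real.exp (-α * t) * lognormalPdf μ σ α ≤ α * 1 * lognormalPdf μ σ α :=
          mul_le_mul_of_nonneg_right (mul_le_mul_of_nonneg_left he hα'.le) hf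
      _ = α * lognormalPdf μ σ α := by ring
  · filter_upwards with α t _
    have h1 : HasDerivAt (fun t : ℝ => -α * t) (-α) t := by
      simpa using (hasDerivAt_id t).const_mul (-α)
    have := (h1.exp.mul_const (lognormalPdf μ σ α))
    refine this.congr_deriv ?_
    ring

end laplace


section main
variable {μ σ M : ℝ} {J : ℕ} {δ : Fin J → ℝ} {j k : Fin J}

lemma qLN_hasDerivAt (hσ : 0 < σ) (hkj : k ≠ j) (q : Fin J → ℝ) :
    HasDerivAt (fun t => qLN δ M μ σ j (Function.update q k t))
      (M * ∫ α in Set.Ioi (0:ℝ), α * (logitShare δ j q α * logitShare δ k q α) *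
        lognormalPdf μ σ α) (q k) := by
  unfold qLN
  exact ((key_deriv (p := q) hσ hkj).2).const_mul M

lemma pd_qLN (hσ : 0 < σ) (hkj : k ≠ j) (q : Fin J → ℝ) :
    pd (qLN δ M μ σ j) k q
      = M * ∫ α in Set.Ioi (0:ℝ), α * (logitShare δ j q α * logitShare δ k q α) *
        lognormalPdf μ σ α :=
  (qLN_hasDerivAt hσ hkj q).deriv

lemma aux_ue {s α : ℝ} (hs : 0 < s) (hα : 0 ≤ α) : α * Real.exp (-(α * s)) ≤ 1 / s := by
  have h := Real.add_one_le_exp (α * s)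
  have he := Real.exp_pos (-(α * s))
  have hprod : Real.exp (α * s) * Real.exp (-(α * s)) = 1 := by
    rw [← Real.exp_add]; simp
  rw [le_div_iff₀ hs]
  nlinarith [mul_le_mul_of_nonneg_right (show α * s ≤ Real.exp (α * s) by linarith) he.le]

end main

end aux


/-- For `k ≠ j`: the cross derivative `∂_{p_k} q_j(p) = M ∫ α σ_j σ_k f dα ≥ 0`;
there is a constant `C > 0` (depending on `δ, M`) such that along any ray,
`0 ≤ ∂_{p_k} q_j(λp) ≤ C (−L'(c_{jk} λ p_j))` with `c_{jk} = (p_j+p_k)/p_j > 1`;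
consequently the cross semi-elasticity `η_{jk}(λp) → 0` as `λ → ∞`. -/
theorem qLN_cross_deriv_ray {J : ℕ} (hJ : 1 ≤ J) (M : ℝ) (hM : 0 < M) (δ : Fin J → ℝ)
    (μ σ : ℝ) (hσ : 0 < σ) (j k : Fin J) (hkj : k ≠ j) :
    (∀ p : Fin J → ℝ, (∀ i, 0 < p i) →
      HasDerivAt (fun t => qLN δ M μ σ j (Function.update p k t))
        (M * ∫ α in Set.Ioi (0 : ℝ),
          α * (logitShare δ j p α * logitShare δ k p α) * lognormalPdf μ σ α) (p k) ∧
      0 ≤ M * ∫ α in Set.Ioi (0 : ℝ),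
          α * (logitShare δ j p α * logitShare δ k p α) * lognormalPdf μ σ α) ∧
    (∃ C > (0 : ℝ), ∀ p : Fin J → ℝ, (∀ i, 0 < p i) →
      (1 < (p j + p k) / p j) ∧
      ∀ l > (0 : ℝ),
        0 ≤ pd (qLN δ M μ σ j) k (l • p) ∧
        pd (qLN δ M μ σ j) k (l • p)
          ≤ C * (-(deriv (lnLaplace μ σ) ((p j + p k) / p j * (l * p j))))) ∧
    (∀ p : Fin J → ℝ, (∀ i, 0 < p i) →
      Tendsto (fun l : ℝ => pd (qLN δ M μ σ j) k (l • p) / qLN δ M μ σ j (l • p))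
        atTop (nhds 0)) := by
  refine ⟨fun p hp => ⟨qLN_hasDerivAt hσ hkj p, mul_nonneg hM.le (int_cross_nonneg hσ p)⟩,
    ⟨M * Real.exp (δ j + δ k), by positivity, fun p hp => ?_⟩, fun p hp => ?_⟩
  · refine ⟨(one_lt_div (hp j)).2 (by linarith [hp k]), fun l hl => ?_⟩
    set q : Fin J → ℝ := l • p with hq
    have hqi : ∀ i, q i = l * p i := fun i => rfl
    set x : ℝ := (p j + p k) / p j * (l * p j) with hxdef
    have hxval : x = l * (p j + p k) := by
      rw [hxdef, div_mul_eq_mul_div, div_eq_iff (hp j).ne']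
      ring
    have hx : 0 < x := by rw [hxval]; exact mul_pos hl (by linarith [hp j, hp k])
    rw [pd_qLN hσ hkj q]
    constructor
    · exact mul_nonneg hM.le (int_cross_nonneg hσ q)
    · have hL : deriv (lnLaplace μ σ) x
          = -(∫ α in Set.Ioi (0:ℝ), α * Real.exp (-α * x) * lognormalPdf μ σ α) :=
        (lnLaplace_hasDerivAt hσ hx).deriv
      rw [hL, neg_neg]
      have hmono : (∫ α in Set.Ioi (0:ℝ), α * (logitShare δ j q α * logitShare δ k q α) *
            lognormalPdf μ σ α)
          ≤ ∫ α in Set.Ioi (0:ℝ), Real.exp (δ j + δ k) *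
            (α * Real.exp (-α * x) * lognormalPdf μ σ α) := by
        apply setIntegral_mono_on (key_deriv (p := q) hσ hkj).1
          ((integrable_mul_exp_pdf hσ hx.le).const_mul _) measurableSet_Ioi
        intro α hα
        have hα' : (0:ℝ) < α := hα
        have hf := pdf_nonneg (μ := μ) hσ hα
        have h2 : logitShare δ j q α * logitShare δ k q α
            ≤ Real.exp (δ j + δ k) * Real.exp (-α * x) := by
          calc logitShare δ j q α * logitShare δ k q α
              ≤ Real.exp (δ j - α * q j) * Real.exp (δ k - α * q k) :=
                mul_le_mul share_le_exp share_le_exp share_pos.le (Real.exp_pos _).le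
            _ = Real.exp (δ j + δ k) * Real.exp (-α * x) := by
                rw [← Real.exp_add, ← Real.exp_add]
                congr 1
                rw [hqi j, hqi k, hxval]
                ring
        calc α * (logitShare δ j q α * logitShare δ k q α) * lognormalPdf μ σ α
            ≤ α * (Real.exp (δ j + δ k) * Real.exp (-α * x)) * lognormalPdf μ σ α :=
              mul_le_mul_of_nonneg_right (mul_le_mul_of_nonneg_left h2 hα'.le) hf
          _ = Real.exp (δ j + δ k) * (α * Real.exp (-α * x) * lognormalPdf μ σ α) := by ring
      rw [integral_const_mul] at hmono
      calc M * ∫ α in Set.Ioi (0:ℝ), α * (logitShare δ j q α * logitShare δ k q α) *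
            lognormalPdf μ σ α
          ≤ M * (Real.exp (δ j + δ k) *
            ∫ α in Set.Ioi (0:ℝ), α * Real.exp (-α * x) * lognormalPdf μ σ α) :=
            mul_le_mul_of_nonneg_left hmono hM.le
        _ = M * Real.exp (δ j + δ k) *
            ∫ α in Set.Ioi (0:ℝ), α * Real.exp (-α * x) * lognormalPdf μ σ α := by ring
  · -- part 3 : limit of the semi-elasticity
    set D : ℝ := 1 + ∑ l', Real.exp (δ l') with hDdef
    have hD0 : 0 < D := by
      have : (0:ℝ) ≤ ∑ l', Real.exp (δ l') := Finset.sum_nonneg fun _ _ => (Real.exp_pos _).le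
      rw [hDdef]; linarith
    set K : ℝ := Real.exp (δ k) * D / p k with hKdef
    have hK0 : 0 < K := div_pos (mul_pos (Real.exp_pos _) hD0) (hp k)
    have main : ∀ l : ℝ, 0 < l →
        0 ≤ pd (qLN δ M μ σ j) k (l • p) / qLN δ M μ σ j (l • p) ∧
        pd (qLN δ M μ σ j) k (l • p) / qLN δ M μ σ j (l • p) ≤ K / l := by
      intro l hl
      set q : Fin J → ℝ := l • p with hq
      have hqi : ∀ i, q i = l * p i := fun i => rfl
      have hq_pos : ∀ i, 0 < q i := fun i => mul_pos hl (hp i)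
      set A : ℝ := ∫ α in Set.Ioi (0:ℝ), Real.exp (-α * (l * p j)) * lognormalPdf μ σ α with hAdef
      have hA0 : 0 < A := integral_exp_pdf_pos hσ (mul_pos hl (hp j)).le
      have hpd0 : 0 ≤ pd (qLN δ M μ σ j) k q := by
        rw [pd_qLN hσ hkj q]
        exact mul_nonneg hM.le (int_cross_nonneg hσ q)
      have hq0 : 0 < qLN δ M μ σ j q := by
        rw [qLN]
        exact mul_pos hM (integral_share_pos hσ q)
      -- lower bound on demand
      have hqlow : M * (Real.exp (δ j) / D * A) ≤ qLN δ M μ σ j q := by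
        rw [qLN]
        apply mul_le_mul_of_nonneg_left ?_ hM.le
        have hint : (∫ α in Set.Ioi (0:ℝ),
              Real.exp (δ j) / D * (Real.exp (-α * (l * p j)) * lognormalPdf μ σ α))
            ≤ ∫ α in Set.Ioi (0:ℝ), logitShare δ j q α * lognormalPdf μ σ α := by
          apply setIntegral_mono_on
            ((integrable_exp_mul_pdf hσ (mul_pos hl (hp j)).le).const_mul _)
            (integrable_share_mul hσ q) measurableSet_Ioi
          intro α hα
          have hα' : (0:ℝ) < α := hα
          have hf := pdf_nonneg (μ := μ) hσ hα
          have hge := share_ge (δ := δ) (j := j) (α := α) hα'.le hq_pos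
          have heq : Real.exp (δ j) / D * Real.exp (-α * (l * p j))
              = Real.exp (δ j - α * q j) / D := by
            rw [hqi j, div_mul_eq_mul_div, ← Real.exp_add]
            congr 2
            ring
          calc Real.exp (δ j) / D * (Real.exp (-α * (l * p j)) * lognormalPdf μ σ α)
              = Real.exp (δ j - α * q j) / D * lognormalPdf μ σ α := by rw [← heq]; ring
            _ ≤ logitShare δ j q α * lognormalPdf μ σ α :=
                mul_le_mul_of_nonneg_right (by rw [hDdef]; exact hge) hf
        rw [integral_const_mul] at hint
        exact hint
      have hqlow0 : 0 < M * (Real.exp (δ j) / D * A) :=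
        mul_pos hM (mul_pos (div_pos (Real.exp_pos _) hD0) hA0)
      -- upper bound on cross derivative
      have hpdup : pd (qLN δ M μ σ j) k q ≤ M * (Real.exp (δ j + δ k) / (l * p k) * A) := by
        rw [pd_qLN hσ hkj q]
        apply mul_le_mul_of_nonneg_left ?_ hM.le
        have hint : (∫ α in Set.Ioi (0:ℝ), α * (logitShare δ j q α * logitShare δ k q α) *
              lognormalPdf μ σ α)
            ≤ ∫ α in Set.Ioi (0:ℝ), Real.exp (δ j + δ k) / (l * p k) *
              (Real.exp (-α * (l * p j)) * lognormalPdf μ σ α) := by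
          apply setIntegral_mono_on (key_deriv (p := q) hσ hkj).1
            ((integrable_exp_mul_pdf hσ (mul_pos hl (hp j)).le).const_mul _)
            measurableSet_Ioi
          intro α hα
          have hα' : (0:ℝ) < α := hα
          have hf := pdf_nonneg (μ := μ) hσ hα
          have hlpk : 0 < l * p k := mul_pos hl (hp k)
          have hue : α * Real.exp (-(α * (l * p k))) ≤ 1 / (l * p k) := aux_ue hlpk hα'.le
          have h2 : logitShare δ j q α * logitShare δ k q α
              ≤ Real.exp (δ j + δ k) * (Real.exp (-(α * (l * p k))) * Real.exp (-α * (l * p j))) := by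
            calc logitShare δ j q α * logitShare δ k q α
                ≤ Real.exp (δ j - α * q j) * Real.exp (δ k - α * q k) :=
                  mul_le_mul share_le_exp share_le_exp share_pos.le (Real.exp_pos _).le
              _ = _ := by
                  rw [← Real.exp_add, ← Real.exp_add, ← Real.exp_add, hqi j, hqi k]
                  congr 1
                  ring
          calc α * (logitShare δ j q α * logitShare δ k q α) * lognormalPdf μ σ α
              ≤ α * (Real.exp (δ j + δ k) * (Real.exp (-(α * (l * p k))) *
                  Real.exp (-α * (l * p j)))) * lognormalPdf μ σ α :=
                mul_le_mul_of_nonneg_right (mul_le_mul_of_nonneg_left h2 hα'.le) hf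
            _ = Real.exp (δ j + δ k) * ((α * Real.exp (-(α * (l * p k)))) *
                  (Real.exp (-α * (l * p j)) * lognormalPdf μ σ α)) := by ring
            _ ≤ Real.exp (δ j + δ k) * ((1 / (l * p k)) *
                  (Real.exp (-α * (l * p j)) * lognormalPdf μ σ α)) := by
                apply mul_le_mul_of_nonneg_left ?_ (Real.exp_pos _).le
                exact mul_le_mul_of_nonneg_right hue
                  (mul_nonneg (Real.exp_pos _).le hf)
            _ = Real.exp (δ j + δ k) / (l * p k) *
                  (Real.exp (-α * (l * p j)) * lognormalPdf μ σ α) := by ring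
        rw [integral_const_mul] at hint
        exact hint
      refine ⟨div_nonneg hpd0 hq0.le, ?_⟩
      have hstep : pd (qLN δ M μ σ j) k q / qLN δ M μ σ j q
          ≤ M * (Real.exp (δ j + δ k) / (l * p k) * A) / (M * (Real.exp (δ j) / D * A)) :=
        div_le_div₀ (mul_pos hM (mul_pos (div_pos (Real.exp_pos _)
          (mul_pos hl (hp k))) hA0)).le hpdup hqlow0 hqlow
      refine hstep.trans (le_of_eq ?_)
      rw [hKdef, Real.exp_add]
      field_simp [hM.ne', hA0.ne', (Real.exp_pos (δ j)).ne', hl.ne', (hp k).ne', hD0.ne']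
    have hub : ∀ᶠ l : ℝ in atTop, pd (qLN δ M μ σ j) k (l • p) / qLN δ M μ σ j (l • p) ≤ K / l := by
      filter_upwards [eventually_gt_atTop 0] with l hl
      exact (main l hl).2
    have hlb : ∀ᶠ l : ℝ in atTop, (0:ℝ) ≤ pd (qLN δ M μ σ j) k (l • p) / qLN δ M μ σ j (l • p) := by
      filter_upwards [eventually_gt_atTop 0] with l hl
      exact (main l hl).1
    have hKl : Tendsto (fun l : ℝ => K / l) atTop (nhds 0) :=
      tendsto_const_nhds.div_atTop tendsto_id
    exact tendsto_of_tendsto_of_tendsto_of_le_of_le' tendsto_const_nhds hKl hlb hub
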